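/- Let n ≥ 1, r ≥ 1, m ≥ 1, s ≥ 1, let S_1,…,S_s ⊆ [n] be pairwise disjoint nonempty subsets, and set a = r·∑_{t=1}^s a_{S_t}. If a ∈ m·P(K_n), then s·r ≤ m; consequently a is a sum of exactly m points of {a_S : S ⊆ [n]}, namely r copies of a_{S_t} for each t ∈ [s] together with m − s·r copies of a_∅ = 0. -/
import Mathlib

/-- Edges of the complete graph `K_n`: 2-element subsets of `Fin n`,
encoded as non-diagonal elements of `Sym2 (Fin n)`. -/
abbrev EdgeKn (n : ℕ) : Type := {e : Sym2 (Fin n) // ¬ e.IsDiag}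

/-- Coordinates of `ℝ^d`, `d = n + n(n-1)/2`: vertices and edges of `K_n`. -/
abbrev CoordKn (n : ℕ) : Type := Fin n ⊕ EdgeKn n

/-- The edge coordinate `{i,j}` for distinct `i, j`. -/
def edgeCoord {n : ℕ} (i j : Fin n) (h : i ≠ j) : CoordKn n :=
  Sum.inr ⟨s(i, j), fun hd => h (Sym2.mk_isDiag_iff.mp hd)⟩

/-- The characteristic vector `a_S` of `S ⊆ [n]`. -/
def charVec {n : ℕ} (S : Finset (Fin n)) : CoordKn n → ℝ
  | Sum.inl i => if i ∈ S then 1 else 0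
  | Sum.inr e => Sym2.lift ⟨fun i j => if i ∈ S ∧ j ∈ S then (1 : ℝ) else 0,
      fun i j => by simp [and_comm]⟩ e.1

/-- The standard inner product on `ℝ^d`. -/
def dotP {n : ℕ} (x y : CoordKn n → ℝ) : ℝ := ∑ c, x c * y c

/-- `S` is in the demand set `D(w, p)`: it maximizes `⟨w - p, a_T⟩` over all `T ⊆ [n]`. -/
def InDemand {n : ℕ} (w p : CoordKn n → ℝ) (S : Finset (Fin n)) : Prop :=
  ∀ T : Finset (Fin n),
    dotP (fun c => w c - p c) (charVec T) ≤ dotP (fun c => w c - p c) (charVec S)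

/-- The correlation polytope `P(K_n)`. -/
def corrPolytope (n : ℕ) : Set (CoordKn n → ℝ) :=
  convexHull ℝ (Set.range (charVec (n := n)))

/-- The dilate `m·A` of a set `A ⊆ ℝ^d`. -/
def dilate {n : ℕ} (m : ℕ) (A : Set (CoordKn n → ℝ)) : Set (CoordKn n → ℝ) :=
  {x | ∃ y ∈ A, x = (m : ℝ) • y}

/-- `F` is a face of `P(K_n)`: the set of maximizers of some linear functional `⟨c, ·⟩`. -/
def IsFaceOf {n : ℕ} (F : Set (CoordKn n → ℝ)) : Prop :=
  ∃ c : CoordKn n → ℝ,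
    F = {x | x ∈ corrPolytope n ∧ ∀ y ∈ corrPolytope n, dotP c y ≤ dotP c x}

/- ### Auxiliary lemmas -/

lemma charVec_edge {n : ℕ} (S : Finset (Fin n)) (i j : Fin n)
    (he : ¬ (s(i,j) : Sym2 (Fin n)).IsDiag) :
    charVec S (Sum.inr ⟨s(i,j), he⟩) = if i ∈ S ∧ j ∈ S then 1 else 0 := rfl

lemma charVec_edge_nonneg {n : ℕ} (S : Finset (Fin n)) (e : EdgeKn n) :
    0 ≤ charVec S (Sum.inr e) := by
  obtain ⟨e, he⟩ := e
  induction e using Sym2.ind with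
  | _ i j => rw [charVec_edge]; positivity

lemma charVec_edge_mul {n : ℕ} (A B : Finset (Fin n)) (e : EdgeKn n) :
    charVec A (Sum.inr e) * charVec B (Sum.inr e) = charVec (A ∩ B) (Sum.inr e) := by
  obtain ⟨e, he⟩ := e
  induction e using Sym2.ind with
  | _ i j =>
    rw [charVec_edge, charVec_edge, charVec_edge]
    simp only [Finset.mem_inter]
    split_ifs <;> simp_all

lemma charVec_empty {n : ℕ} : charVec (∅ : Finset (Fin n)) = 0 := by
  funext co
  cases co with
  | inl i => simp [charVec]
  | inr e =>
    obtain ⟨e, he⟩ := e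
    induction e using Sym2.ind with
    | _ i j => rw [charVec_edge]; simp

lemma dotP_isLinear {n : ℕ} (c : CoordKn n → ℝ) : IsLinearMap ℝ (dotP c) := by
  constructor
  · intro x y; simp [dotP, mul_add, Finset.sum_add_distrib]
  · intro a x
    simp only [dotP, Pi.smul_apply, smul_eq_mul, Finset.mul_sum]
    exact Finset.sum_congr rfl fun i _ => by ring

lemma dotP_split {n : ℕ} (x y : CoordKn n → ℝ) :
    dotP x y = (∑ i : Fin n, x (Sum.inl i) * y (Sum.inl i))
      + ∑ e : EdgeKn n, x (Sum.inr e) * y (Sum.inr e) := by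
  rw [dotP, Fintype.sum_sum_type]

lemma edge_sum_lb {n : ℕ} (W : Finset (Fin n)) :
    (W.card : ℝ) ≤ 1 + ∑ e : EdgeKn n, charVec W (Sum.inr e) := by
  rcases W.eq_empty_or_nonempty with h | ⟨w0, hw0⟩
  · subst h
    simp only [Finset.card_empty, Nat.cast_zero]
    have : (0:ℝ) ≤ ∑ e : EdgeKn n, charVec (∅ : Finset (Fin n)) (Sum.inr e) :=
      Finset.sum_nonneg fun e _ => charVec_edge_nonneg _ e
    linarith
  · set F : Finset (EdgeKn n) := (W.erase w0).attach.image
      (fun i => (⟨s(w0, i.1), by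
        rw [Sym2.mk_isDiag_iff]
        exact (Finset.ne_of_mem_erase i.2).symm⟩ : EdgeKn n)) with hF
    have hinj : Function.Injective
        (fun i : {x // x ∈ W.erase w0} => (⟨s(w0, i.1), by
          rw [Sym2.mk_isDiag_iff]
          exact (Finset.ne_of_mem_erase i.2).symm⟩ : EdgeKn n)) := by
      intro i j hij
      have : (s(w0, i.1) : Sym2 (Fin n)) = s(w0, j.1) := congrArg Subtype.val hij
      have := Sym2.congr_right.mp this
      exact Subtype.ext this
    have hcard : F.card = W.card - 1 := by
      rw [hF, Finset.card_image_of_injective _ hinj, Finset.card_attach,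
        Finset.card_erase_of_mem hw0]
    have hsumF : ∑ e ∈ F, charVec W (Sum.inr e) = (F.card : ℝ) := by
      rw [Finset.sum_congr rfl (fun e he => ?_), Finset.sum_const, nsmul_eq_mul, mul_one]
      rw [hF] at he
      obtain ⟨i, hi, rfl⟩ := Finset.mem_image.mp he
      rw [charVec_edge]
      have : w0 ∈ W ∧ i.1 ∈ W := ⟨hw0, Finset.mem_of_mem_erase i.2⟩
      simp [this.1, this.2]
    have hle : ∑ e ∈ F, charVec W (Sum.inr e) ≤ ∑ e : EdgeKn n, charVec W (Sum.inr e) :=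
      Finset.sum_le_sum_of_subset_of_nonneg (Finset.subset_univ F)
        (fun e _ _ => charVec_edge_nonneg _ e)
    have h1 : 1 ≤ W.card := Finset.card_pos.mpr ⟨w0, hw0⟩
    have : ((W.card - 1 : ℕ) : ℝ) = (W.card : ℝ) - 1 := by
      push_cast [h1]; ring
    rw [hsumF, hcard, this] at hle
    linarith

/-- The main upper-bound part: `s * r ≤ m`. -/
lemma sr_le_m (n r m s : ℕ)
    (Ssets : Fin s → Finset (Fin n)) (hne : ∀ t, (Ssets t).Nonempty)
    (hdisj : ∀ t t' : Fin s, t ≠ t' → Disjoint (Ssets t) (Ssets t'))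
    (a : CoordKn n → ℝ) (hadef : a = (r : ℝ) • ∑ t, charVec (Ssets t))
    (y : CoordKn n → ℝ) (hy : y ∈ corrPolytope n) (hay : a = (m : ℝ) • y) :
    s * r ≤ m := by
  choose v hv using hne
  have hvinj : Function.Injective v := by
    intro t t' h
    by_contra hne'
    exact Finset.disjoint_left.mp (hdisj t t' hne') (hv t) (h ▸ hv t')
  set V : Finset (Fin n) := Finset.image v Finset.univ with hV
  set c : CoordKn n → ℝ := fun co => match co with
    | Sum.inl i => if i ∈ V then 1 else 0
    | Sum.inr e => - charVec V (Sum.inr e) with hc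
  have hbound : ∀ T : Finset (Fin n), dotP c (charVec T) ≤ 1 := by
    intro T
    rw [dotP_split]
    have hvert : ∑ i : Fin n, c (Sum.inl i) * charVec T (Sum.inl i)
        = ((V ∩ T).card : ℝ) := by
      have : ∀ i : Fin n, c (Sum.inl i) * charVec T (Sum.inl i)
          = if i ∈ V ∩ T then (1:ℝ) else 0 := by
        intro i
        show (if i ∈ V then (1:ℝ) else 0) * (if i ∈ T then (1:ℝ) else 0) = _
        simp only [Finset.mem_inter]
        split_ifs <;> simp_all
      rw [Finset.sum_congr rfl (fun i _ => this i), Finset.sum_ite_mem,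
        Finset.univ_inter, Finset.sum_const, nsmul_eq_mul, mul_one]
    have hedge : ∑ e : EdgeKn n, c (Sum.inr e) * charVec T (Sum.inr e)
        = - ∑ e : EdgeKn n, charVec (V ∩ T) (Sum.inr e) := by
      rw [← Finset.sum_neg_distrib]
      refine Finset.sum_congr rfl fun e _ => ?_
      show (- charVec V (Sum.inr e)) * charVec T (Sum.inr e) = _
      rw [neg_mul, charVec_edge_mul]
    rw [hvert, hedge]
    have := edge_sum_lb (V ∩ T)
    linarith
  have hval : dotP c a = (s : ℝ) * r := by
    rw [dotP_split]
    have hedge : ∑ e : EdgeKn n, c (Sum.inr e) * a (Sum.inr e) = 0 := by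
      refine Finset.sum_eq_zero fun e _ => ?_
      show (- charVec V (Sum.inr e)) * a (Sum.inr e) = 0
      obtain ⟨e', he'⟩ := e
      induction e' using Sym2.ind with
      | _ i j =>
        rw [charVec_edge]
        by_cases hij : i ∈ V ∧ j ∈ V
        · have hija : a (Sum.inr ⟨s(i,j), he'⟩) = 0 := by
            rw [hadef]
            simp only [Pi.smul_apply, Finset.sum_apply, smul_eq_mul]
            rw [Finset.sum_eq_zero, mul_zero]
            intro u _
            rw [charVec_edge]
            obtain ⟨t, -, rfl⟩ := Finset.mem_image.mp hij.1
            obtain ⟨t', -, rfl⟩ := Finset.mem_image.mp hij.2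
            have htt' : t ≠ t' := fun h => (Sym2.mk_isDiag_iff.not.mp he') (by rw [h])
            by_cases hu : v t ∈ Ssets u ∧ v t' ∈ Ssets u
            · have h1 : u = t := by
                by_contra h
                exact Finset.disjoint_left.mp (hdisj u t h) hu.1 (hv t)
              have h2 : u = t' := by
                by_contra h
                exact Finset.disjoint_left.mp (hdisj u t' h) hu.2 (hv t')
              exact absurd (h1 ▸ h2) htt'
            · simp [hu]
          rw [hija, mul_zero]
        · simp [hij]
    have hvert : ∑ i : Fin n, c (Sum.inl i) * a (Sum.inl i) = (s : ℝ) * r := by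
      have h1 : ∀ i : Fin n, c (Sum.inl i) * a (Sum.inl i)
          = if i ∈ V then a (Sum.inl i) else 0 := by
        intro i
        show (if i ∈ V then (1:ℝ) else 0) * a (Sum.inl i) = _
        split_ifs <;> simp
      rw [Finset.sum_congr rfl (fun i _ => h1 i), Finset.sum_ite_mem,
        Finset.univ_inter, hV, Finset.sum_image (fun x _ y _ h => hvinj h)]
      have h2 : ∀ t : Fin s, a (Sum.inl (v t)) = (r : ℝ) := by
        intro t
        rw [hadef]
        simp only [Pi.smul_apply, Finset.sum_apply, smul_eq_mul]
        have : ∑ u : Fin s, charVec (Ssets u) (Sum.inl (v t)) = 1 := by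
          rw [Finset.sum_eq_single t]
          · show (if v t ∈ Ssets t then (1:ℝ) else 0) = 1
            simp [hv t]
          · intro u _ hu
            show (if v t ∈ Ssets u then (1:ℝ) else 0) = 0
            have : v t ∉ Ssets u := fun h =>
              Finset.disjoint_left.mp (hdisj u t hu) h (hv t)
            simp [this]
          · intro h; exact absurd (Finset.mem_univ t) h
        rw [this, mul_one]
      rw [Finset.sum_congr rfl (fun t _ => h2 t)]
      simp [mul_comm]
    rw [hvert, hedge, add_zero]
  have hyb : dotP c y ≤ 1 := by
    have hsub : corrPolytope n ⊆ {x | dotP c x ≤ 1} := by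
      apply convexHull_min
      · rintro x ⟨T, rfl⟩; exact hbound T
      · exact convex_halfSpace_le (dotP_isLinear c) 1
    exact hsub hy
  have hma : dotP c a = (m : ℝ) * dotP c y := by
    rw [hay, (dotP_isLinear c).2]; rfl
  have : (s : ℝ) * r ≤ m := by
    rw [← hval, hma]
    calc (m:ℝ) * dotP c y ≤ (m:ℝ) * 1 :=
          mul_le_mul_of_nonneg_left hyb (by positivity)
      _ = m := mul_one _
  exact_mod_cast this

lemma count1 (r m s : ℕ) (hr : 1 ≤ r) (hsm : s * r ≤ m) (t : Fin s) :
    (Finset.univ.filter (fun b : Fin m => (b : ℕ) / r = (t : ℕ))).card = r := by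
  have hr0 : 0 < r := hr
  rw [Finset.card_filter]
  rw [Fin.sum_univ_eq_sum_range (fun b => if b / r = (t:ℕ) then 1 else 0)]
  rw [← Finset.card_filter]
  have hkey : (Finset.range m).filter (fun b => b / r = (t:ℕ))
      = Finset.Ico ((t:ℕ)*r) ((t:ℕ)*r + r) := by
    ext b
    simp only [Finset.mem_filter, Finset.mem_range, Finset.mem_Ico]
    have hdiv : b / r = (t:ℕ) ↔ (t:ℕ)*r ≤ b ∧ b < (t:ℕ)*r + r := by
      constructor
      · intro h
        constructor
        · rw [← h]; exact Nat.div_mul_le_self b r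
        · have : b / r < (t:ℕ) + 1 := by omega
          have := (Nat.div_lt_iff_lt_mul hr0).mp this
          rw [Nat.succ_mul] at this
          exact this
      · rintro ⟨h1, h2⟩
        have ha : (t:ℕ) ≤ b / r := (Nat.le_div_iff_mul_le hr0).mpr h1
        have hb : b / r < (t:ℕ) + 1 := by
          rw [Nat.div_lt_iff_lt_mul hr0, Nat.succ_mul]; exact h2
        omega
    have hm' : (t:ℕ)*r + r ≤ m := by
      have : ((t:ℕ)+1) * r ≤ s * r := Nat.mul_le_mul_right r t.isLt
      rw [Nat.succ_mul] at this
      exact le_trans this hsm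
    constructor
    · rintro ⟨-, h⟩; exact hdiv.mp h
    · rintro h; exact ⟨lt_of_lt_of_le h.2 hm', hdiv.mpr h⟩
  rw [hkey, Nat.card_Ico, Nat.add_sub_cancel_left]

lemma count2 (r m s : ℕ) :
    (Finset.univ.filter (fun b : Fin m => s * r ≤ (b : ℕ))).card = m - s * r := by
  rw [Finset.card_filter]
  rw [Fin.sum_univ_eq_sum_range (fun b => if s * r ≤ b then 1 else 0)]
  rw [← Finset.card_filter]
  have : (Finset.range m).filter (fun b => s * r ≤ b) = Finset.Ico (s*r) m := by
    ext b
    simp only [Finset.mem_filter, Finset.mem_range, Finset.mem_Ico]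
    exact and_comm
  rw [this, Nat.card_Ico]

/-- Let `S_1, …, S_s ⊆ [n]` be pairwise disjoint nonempty sets and
`a = r·∑_t a_{S_t}`. If `a ∈ m·P(K_n)` then `s·r ≤ m`, and consequently `a`
is a sum of exactly `m` characteristic vectors: `r` copies of each `a_{S_t}`
and `m - s·r` copies of `a_∅ = 0`. -/
theorem stmt13 (n r m s : ℕ) (hn : 1 ≤ n) (hr : 1 ≤ r) (hm : 1 ≤ m)
    (hs : 1 ≤ s)
    (Ssets : Fin s → Finset (Fin n)) (hne : ∀ t, (Ssets t).Nonempty)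
    (hdisj : ∀ t t' : Fin s, t ≠ t' → Disjoint (Ssets t) (Ssets t'))
    (a : CoordKn n → ℝ) (hadef : a = (r : ℝ) • ∑ t, charVec (Ssets t))
    (haP : a ∈ dilate m (corrPolytope n)) :
    s * r ≤ m ∧
    ∃ T : Fin m → Finset (Fin n),
      (∀ t : Fin s, (Finset.univ.filter (fun b => T b = Ssets t)).card = r) ∧
      (Finset.univ.filter (fun b => T b = (∅ : Finset (Fin n)))).card
        = m - s * r ∧
      a = ∑ b, charVec (T b) := by
  obtain ⟨y, hy, hay⟩ := haP
  have hsm : s * r ≤ m := sr_le_m n r m s Ssets hne hdisj a hadef y hy hay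
  have hr0 : 0 < r := hr
  -- Ssets is injective
  have hSinj : Function.Injective Ssets := by
    intro u u' h
    by_contra hne'
    have hd := hdisj u u' hne'
    rw [h, disjoint_self] at hd
    exact (hne u').ne_empty hd
  refine ⟨hsm, fun b => if h : (b:ℕ)/r < s then Ssets ⟨(b:ℕ)/r, h⟩ else ∅, ?_, ?_, ?_⟩
  · -- fiber over Ssets t has card r
    intro t
    have hfe : (Finset.univ.filter fun b : Fin m =>
          (if h : (b:ℕ)/r < s then Ssets ⟨(b:ℕ)/r, h⟩ else ∅) = Ssets t)
        = Finset.univ.filter (fun b : Fin m => (b:ℕ)/r = (t:ℕ)) := by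
      ext b
      simp only [Finset.mem_filter, Finset.mem_univ, true_and]
      by_cases hb : (b:ℕ)/r < s
      · rw [dif_pos hb]
        constructor
        · intro h
          exact congrArg Fin.val (hSinj h)
        · intro h
          congr 1
          exact Fin.ext h
      · rw [dif_neg hb]
        constructor
        · intro h; exact absurd h.symm (hne t).ne_empty
        · intro h; exact absurd (h ▸ t.isLt) hb
    rw [hfe]
    exact count1 r m s hr hsm t
  · -- fiber over ∅ has card m - s*r
    have hfe : (Finset.univ.filter fun b : Fin m =>
          (if h : (b:ℕ)/r < s then Ssets ⟨(b:ℕ)/r, h⟩ else ∅) = (∅ : Finset (Fin n)))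
        = Finset.univ.filter (fun b : Fin m => s * r ≤ (b:ℕ)) := by
      ext b
      simp only [Finset.mem_filter, Finset.mem_univ, true_and]
      by_cases hb : (b:ℕ)/r < s
      · rw [dif_pos hb]
        constructor
        · intro h; exact absurd h (hne _).ne_empty
        · intro h
          have : s ≤ (b:ℕ)/r := (Nat.le_div_iff_mul_le hr0).mpr h
          omega
      · rw [dif_neg hb]
        refine ⟨fun _ => ?_, fun _ => rfl⟩
        have : s ≤ (b:ℕ)/r := by omega
        exact (Nat.le_div_iff_mul_le hr0).mp this
    rw [hfe]
    exact count2 r m s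
  · -- the sum identity
    set T : Fin m → Finset (Fin n) :=
      fun b => if h : (b:ℕ)/r < s then Ssets ⟨(b:ℕ)/r, h⟩ else ∅ with hT
    have hfib := Finset.sum_fiberwise (Finset.univ : Finset (Fin m)) T
      (fun b => charVec (T b))
    rw [← hfib]
    have hinner : ∀ S : Finset (Fin n),
        ∑ b ∈ Finset.univ.filter (fun b => T b = S), charVec (T b)
        = (Finset.univ.filter (fun b => T b = S)).card • charVec S := by
      intro S
      rw [Finset.sum_congr rfl (fun b hb => by
        rw [(Finset.mem_filter.mp hb).2]), Finset.sum_const]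
    rw [Finset.sum_congr rfl (fun S _ => hinner S)]
    -- restrict the outer sum to the image of Ssets
    have himg : ∑ S : Finset (Fin n),
        (Finset.univ.filter (fun b => T b = S)).card • charVec S
        = ∑ S ∈ Finset.image Ssets Finset.univ,
            (Finset.univ.filter (fun b => T b = S)).card • charVec S := by
      symm
      apply Finset.sum_subset (Finset.subset_univ _)
      intro S _ hS
      by_cases hSe : S = ∅
      · rw [hSe, charVec_empty, smul_zero]
      · have : (Finset.univ.filter (fun b => T b = S)) = ∅ := by
          apply Finset.filter_false_of_mem
          intro b _
          show ¬ (if h : (b:ℕ)/r < s then Ssets ⟨(b:ℕ)/r, h⟩ else ∅) = S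
          by_cases hb : (b:ℕ)/r < s
          · rw [dif_pos hb]
            intro h
            exact hS (Finset.mem_image.mpr ⟨_, Finset.mem_univ _, h⟩)
          · rw [dif_neg hb]
            intro h
            exact hSe h.symm
        rw [this, Finset.card_empty, zero_smul]
    rw [himg, Finset.sum_image (fun x _ y _ h => hSinj h)]
    -- each fiber has card r
    have hcard : ∀ t : Fin s,
        (Finset.univ.filter (fun b => T b = Ssets t)).card = r := by
      intro t
      have hfe : (Finset.univ.filter fun b : Fin m => T b = Ssets t)
          = Finset.univ.filter (fun b : Fin m => (b:ℕ)/r = (t:ℕ)) := by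
        ext b
        simp only [Finset.mem_filter, Finset.mem_univ, true_and, hT]
        by_cases hb : (b:ℕ)/r < s
        · rw [dif_pos hb]
          exact ⟨fun h => congrArg Fin.val (hSinj h), fun h => by congr 1; exact Fin.ext h⟩
        · rw [dif_neg hb]
          exact ⟨fun h => absurd h.symm (hne t).ne_empty,
            fun h => absurd (h ▸ t.isLt) hb⟩
      rw [hfe]
      exact count1 r m s hr hsm t
    rw [Finset.sum_congr rfl (fun t _ => by rw [hcard t])]
    rw [hadef, Finset.smul_sum]
    exact Finset.sum_congr rfl fun t _ => (Nat.cast_smul_eq_nsmul ℝ r _)
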